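/- Let E be a qubit channel whose affine matrix M is symmetric with all eigenvalues nonnegative (i.e., M is positive semidefinite symmetric). Then for every unitary V, the average fidelity of the channel ρ ↦ V E(ρ) V† does not exceed the average fidelity of E; i.e., the fidelity increase Δ F̄ = (2/3)max(xᵀB̂x + x₀ v·x) over x₀²+‖x‖²=1 is ≤ 0 given v = 0 and B̂ = (1/2)(M − (Tr M)I). -/

import Mathlib

open Matrix BigOperators

open scoped MatrixOrder in
lemma quad_le_trace_aux (M : Matrix (Fin 3) (Fin 3) ℝ) (hM : M.PosSemidef)
    (x : Fin 3 → ℝ) :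
    x ⬝ᵥ M.mulVec x ≤ M.trace * ∑ α, x α ^ 2 := by
  set S := CFC.sqrt M with hS
  have hsym : Sᵀ = S := by
    have := (CFC.sqrt_nonneg M).posSemidef.1
    simpa [Matrix.IsHermitian] using this
  have hsq : S * S = M := by
    have h := CFC.sq_sqrt M hM.nonneg
    rw [pow_two] at h
    exact h
  have hQ : x ⬝ᵥ M.mulVec x = ∑ i, (S.mulVec x i) ^ 2 := by
    rw [← hsq, ← Matrix.mulVec_mulVec]
    rw [dotProduct_mulVec, ← Matrix.mulVec_transpose, hsym]
    simp [dotProduct, pow_two]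
  have hTr : M.trace = ∑ i, ∑ j, S i j ^ 2 := by
    rw [← hsq]
    simp only [Matrix.trace, Matrix.diag, Matrix.mul_apply]
    refine Finset.sum_congr rfl fun i _ => Finset.sum_congr rfl fun j _ => ?_
    have h2 : S j i = S i j :=
      (congrFun (congrFun hsym j) i).symm
    rw [h2, pow_two]
  rw [hQ, hTr, Finset.sum_mul]
  refine Finset.sum_le_sum fun i _ => ?_
  calc S.mulVec x i ^ 2 = (∑ j, S i j * x j) ^ 2 := by
        simp [Matrix.mulVec, dotProduct]
    _ ≤ (∑ j, S i j ^ 2) * ∑ j, x j ^ 2 := by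
        have h := Finset.sum_mul_sq_le_sq_mul_sq Finset.univ (fun j => S i j) x
        simpa [pow_two] using h

/-- If the affine matrix `M` of a qubit channel is symmetric positive semidefinite
(so `v = 0` and `B̂ = (1/2)(M − (Tr M)·I)`), then for every unitary `V = x₀ + i x·σ`
the fidelity change `(2/3)(xᵀ B̂ x + x₀ v·x)` is nonpositive: composing with any
unitary cannot increase the average fidelity. -/
theorem no_fidelity_increase_psd (M : Matrix (Fin 3) (Fin 3) ℝ) (hM : M.PosSemidef)
    (v : Fin 3 → ℝ) (hv : v = 0)
    (Bhat : Matrix (Fin 3) (Fin 3) ℝ)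
    (hBhat : Bhat = (1/2 : ℝ) • (M - M.trace • (1 : Matrix (Fin 3) (Fin 3) ℝ)))
    (x₀ : ℝ) (x : Fin 3 → ℝ) (hx : x₀ ^ 2 + ∑ α, x α ^ 2 = 1) :
    (2/3) * (x ⬝ᵥ Bhat.mulVec x + x₀ * (v ⬝ᵥ x)) ≤ 0 := by
  subst hv hBhat
  have key := quad_le_trace_aux M hM x
  have hid : x ⬝ᵥ (M.trace • (1 : Matrix (Fin 3) (Fin 3) ℝ)).mulVec x
      = M.trace * ∑ α, x α ^ 2 := by
    simp only [Matrix.smul_mulVec, Matrix.one_mulVec, dotProduct,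
      Pi.smul_apply, smul_eq_mul, Finset.mul_sum, pow_two]
    exact Finset.sum_congr rfl fun i _ => by ring
  have hmain : x ⬝ᵥ ((1/2 : ℝ) • (M - M.trace • (1 : Matrix (Fin 3) (Fin 3) ℝ))).mulVec x
      = (1/2) * (x ⬝ᵥ M.mulVec x - M.trace * ∑ α, x α ^ 2) := by
    rw [Matrix.smul_mulVec, dotProduct_smul, Matrix.sub_mulVec,
      dotProduct_sub, hid, smul_eq_mul]
  rw [hmain]
  simp only [zero_dotProduct, mul_zero, add_zero]
  nlinarith [key]
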